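/- Let ψ: ℝ → ℝ be convex, let I = {a, a+1, ..., b} ⊂ ℤ, and define J(f) = Σ_{i=a+1}^{b} ψ(f(i) - f(i-1)) for f: I → ℝ. Fix f: I → ℝ and let K_f be the set of g: I → ℝ with g ≤ f, g(a) = f(a), g(b) = f(b). Then the infimum of J over K_f is attained at the lower convex envelope h of f (the pointwise supremum of all convex functions on I bounded above by f), i.e., inf_{g ∈ K_f} J(g) = J(h). -/

import Mathlib

open Finset in
lemma icc_insert_top (a b : ℤ) (h : a ≤ b + 1) :
    Finset.Icc a (b + 1) = insert (b + 1) (Finset.Icc a b) := by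
  ext x; simp only [Finset.mem_Icc, Finset.mem_insert]; omega

lemma sum_icc_top (F : ℤ → ℝ) (a b : ℤ) (h : a ≤ b + 1) :
    ∑ i ∈ Finset.Icc a (b + 1), F i = (∑ i ∈ Finset.Icc a b, F i) + F (b + 1) := by
  rw [icc_insert_top a b h, Finset.sum_insert (by simp)]
  ring

/-- Abel summation over a discrete interval. -/
lemma abel_aux (c e : ℤ → ℝ) (a : ℤ) : ∀ b, a + 1 ≤ b →
    ∑ i ∈ Finset.Icc (a + 1) b, c i * (e i - e (i - 1)) =
      c b * e b - c (a + 1) * e a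
        + ∑ i ∈ Finset.Icc (a + 1) (b - 1), (c i - c (i + 1)) * e i := by
  refine Int.le_induction ?_ ?_
  ·
      have h1 : a + 1 - 1 = a := by ring
      rw [Finset.Icc_self, Finset.sum_singleton, h1,
        Finset.Icc_eq_empty (by omega), Finset.sum_empty]
      ring
  · intro b hb ih
    have h1 : b + 1 - 1 = b := by ring
    rw [sum_icc_top _ _ _ (by omega), h1, ih]
    rw [show Finset.Icc (a+1) b = Finset.Icc (a+1) (b-1+1) by rw [sub_add_cancel],
      sum_icc_top _ _ _ (by omega), sub_add_cancel]
    ring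

/-- "Left slope sup" of ψ at t : a subgradient choice that is monotone in t. -/
noncomputable def lsl (ψ : ℝ → ℝ) (t : ℝ) : ℝ :=
  sSup ((fun x => (ψ x - ψ t) / (x - t)) '' Set.Iio t)

lemma slope_mono {ψ : ℝ → ℝ} (hψ : ConvexOn ℝ Set.univ ψ) {t x y : ℝ}
    (hx : x ≠ t) (hy : y ≠ t) (hxy : x ≤ y) :
    (ψ x - ψ t) / (x - t) ≤ (ψ y - ψ t) / (y - t) :=
  hψ.secant_mono trivial trivial trivial hx hy hxy

lemma lsl_nonempty (ψ : ℝ → ℝ) (t : ℝ) :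
    ((fun x => (ψ x - ψ t) / (x - t)) '' Set.Iio t).Nonempty :=
  ⟨_, ⟨t - 1, by simp, rfl⟩⟩

lemma lsl_bdd {ψ : ℝ → ℝ} (hψ : ConvexOn ℝ Set.univ ψ) (t : ℝ) :
    BddAbove ((fun x => (ψ x - ψ t) / (x - t)) '' Set.Iio t) := by
  refine ⟨(ψ (t + 1) - ψ t) / (t + 1 - t), ?_⟩
  rintro s ⟨x, hx, rfl⟩
  exact slope_mono hψ (ne_of_lt hx) (by intro h; linarith [h ▸ hx]) (by
    simp only [Set.mem_Iio] at hx; linarith)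

lemma lsl_subgrad {ψ : ℝ → ℝ} (hψ : ConvexOn ℝ Set.univ ψ) (t x : ℝ) :
    ψ t + lsl ψ t * (x - t) ≤ ψ x := by
  rcases lt_trichotomy x t with hlt | rfl | hgt
  · have h1 : (ψ x - ψ t) / (x - t) ≤ lsl ψ t :=
      le_csSup (lsl_bdd hψ t) ⟨x, hlt, rfl⟩
    have h2 : x - t < 0 := by linarith
    rw [div_le_iff_of_neg h2] at h1
    linarith
  · simp
  · have h1 : lsl ψ t ≤ (ψ x - ψ t) / (x - t) := by
      refine csSup_le (lsl_nonempty ψ t) ?_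
      rintro s ⟨y, hy, rfl⟩
      simp only [Set.mem_Iio] at hy
      exact slope_mono hψ (ne_of_lt hy) (ne_of_gt hgt) (by linarith)
    have h2 : (0:ℝ) < x - t := by linarith
    rw [le_div_iff₀ h2] at h1
    linarith

lemma lsl_mono {ψ : ℝ → ℝ} (hψ : ConvexOn ℝ Set.univ ψ) : Monotone (lsl ψ) := by
  intro t u htu
  rcases eq_or_lt_of_le htu with rfl | htu
  · exact le_refl _
  have h1 : lsl ψ t ≤ (ψ t - ψ u) / (t - u) := by
    refine csSup_le (lsl_nonempty ψ t) ?_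
    rintro s ⟨x, hx, rfl⟩
    simp only [Set.mem_Iio] at hx
    have := slope_mono hψ (ne_of_lt hx) (ne_of_gt htu) (le_of_lt (hx.trans htu))
    calc (ψ x - ψ t)/(x - t) ≤ (ψ u - ψ t)/(u - t) := this
    _ = (ψ t - ψ u)/(t - u) := by rw [← neg_sub (ψ t), ← neg_sub t, neg_div_neg_eq]
  exact h1.trans (le_csSup (lsl_bdd hψ u) ⟨t, htu, rfl⟩)

/-- On a discrete interval `I = {a,...,b} ⊂ ℤ`, with `ψ` convex and
`J g = ∑_{i=a+1}^b ψ(g i - g (i-1))`, the infimum of `J` over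
`K_f = {g ≤ f on I, g a = f a, g b = f b}` equals `J h`, where `h` is the
lower convex envelope of `f` (sup of discretely convex functions below `f` on `I`). -/
theorem stmt0 (a b : ℤ) (hab : a ≤ b) (ψ : ℝ → ℝ) (hψ : ConvexOn ℝ Set.univ ψ)
    (f h : ℤ → ℝ)
    (DConvex : (ℤ → ℝ) → Prop)
    (hDConvex : ∀ g, DConvex g ↔
      ∀ i : ℤ, a ≤ i → i + 2 ≤ b → g (i + 1) - g i ≤ g (i + 2) - g (i + 1))
    (J : (ℤ → ℝ) → ℝ)
    (hJ : ∀ g, J g = ∑ i ∈ Finset.Icc (a + 1) b, ψ (g i - g (i - 1)))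
    (hh : ∀ i ∈ Set.Icc a b,
      IsLUB {y : ℝ | ∃ g : ℤ → ℝ, DConvex g ∧ (∀ j ∈ Set.Icc a b, g j ≤ f j) ∧ y = g i}
        (h i)) :
    sInf (J '' {g : ℤ → ℝ | (∀ j ∈ Set.Icc a b, g j ≤ f j) ∧ g a = f a ∧ g b = f b})
      = J h := by
  -- h is below f on I
  have hle : ∀ j ∈ Set.Icc a b, h j ≤ f j := by
    intro j hj
    refine (hh j hj).2 ?_
    rintro y ⟨g, hgc, hgle, rfl⟩
    exact hgle j hj
  -- h is discretely convex
  have hconv2 : ∀ i : ℤ, a ≤ i → i + 2 ≤ b →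
      h (i + 1) - h i ≤ h (i + 2) - h (i + 1) := by
    intro i hi hib
    have h1 : i ∈ Set.Icc a b := ⟨hi, by omega⟩
    have h2 : i + 2 ∈ Set.Icc a b := ⟨by omega, hib⟩
    have h3 : i + 1 ∈ Set.Icc a b := ⟨by omega, by omega⟩
    have hub : h (i + 1) ≤ (h i + h (i + 2)) / 2 := by
      refine (hh _ h3).2 ?_
      rintro y ⟨g, hgc, hgle, rfl⟩
      have hg1 : g i ≤ h i := (hh i h1).1 ⟨g, hgc, hgle, rfl⟩
      have hg2 : g (i + 2) ≤ h (i + 2) := (hh _ h2).1 ⟨g, hgc, hgle, rfl⟩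
      have := (hDConvex g).mp hgc i hi hib
      linarith
    linarith
  -- contact at strict breakpoints
  have contact : ∀ i : ℤ, a ≤ i → i + 2 ≤ b →
      h (i + 1) - h i < h (i + 2) - h (i + 1) → h (i + 1) = f (i + 1) := by
    intro i hi hib hstrict
    have h3 : i + 1 ∈ Set.Icc a b := ⟨by omega, by omega⟩
    refine le_antisymm (hle _ h3) ?_
    by_contra hlt
    push_neg at hlt
    set δ := min (f (i + 1) - h (i + 1)) ((h i + h (i + 2) - 2 * h (i + 1)) / 2) with hδ
    have hδpos : 0 < δ := lt_min (by linarith) (by linarith)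
    have hδ1 : δ ≤ f (i + 1) - h (i + 1) := min_le_left _ _
    have hδ2 : δ ≤ (h i + h (i + 2) - 2 * h (i + 1)) / 2 := min_le_right _ _
    set h' : ℤ → ℝ := fun x => if x = i + 1 then h (i + 1) + δ else h x with hh'
    have v1 : h' (i + 1) = h (i + 1) + δ := by simp [hh']
    have v2 : ∀ x : ℤ, x ≠ i + 1 → h' x = h x := by
      intro x hx
      simp [hh', hx]
    have hc' : DConvex h' := by
      rw [hDConvex]
      intro k hk hkb
      by_cases e1 : k = i
      · rw [e1, v2 i (by omega), v1, v2 (i + 2) (by omega)]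
        linarith
      by_cases e2 : k = i - 1
      · rw [e2, show i - 1 + 1 = i by omega, show i - 1 + 2 = i + 1 by omega, v1,
          v2 (i - 1) (by omega), v2 i (by omega)]
        have hcc := hconv2 (i - 1) (by omega) (by omega)
        rw [show i - 1 + 1 = i by omega, show i - 1 + 2 = i + 1 by omega] at hcc
        linarith
      by_cases e3 : k = i + 1
      · rw [e3, v1, v2 (i + 1 + 1) (by omega), v2 (i + 1 + 2) (by omega)]
        have hcc := hconv2 (i + 1) (by omega) (by omega)
        linarith
      · rw [v2 k (by omega), v2 (k + 1) (by omega), v2 (k + 2) (by omega)]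
        exact hconv2 k hk hkb
    have hle' : ∀ j ∈ Set.Icc a b, h' j ≤ f j := by
      intro j hj
      by_cases e : j = i + 1
      · subst e
        rw [v1]
        linarith
      · rw [v2 j e]
        exact hle j hj
    have hmem : h (i + 1) + δ ≤ h (i + 1) :=
      (hh _ h3).1 ⟨h', hc', hle', v1.symm⟩
    linarith
  rcases eq_or_lt_of_le hab with rfl | hab'
  · -- degenerate case a = b
    have hJ0 : ∀ g : ℤ → ℝ, J g = 0 := by
      intro g
      rw [hJ g, Finset.Icc_eq_empty (by omega), Finset.sum_empty]
    refine IsLeast.csInf_eq ⟨⟨f, ⟨fun j _ => le_refl _, rfl, rfl⟩, by rw [hJ0, hJ0]⟩, ?_⟩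
    rintro y ⟨g, _, rfl⟩
    rw [hJ0, hJ0]
  -- endpoints: h a = f a
  have hne1 : (Finset.Icc (a + 1) b).Nonempty := ⟨b, Finset.mem_Icc.mpr ⟨by omega, le_refl b⟩⟩
  set s₁ := (Finset.Icc (a + 1) b).inf' hne1 (fun i => (f i - f a) / ((i : ℝ) - (a : ℝ))) with hs₁
  set g₁ : ℤ → ℝ := fun x => f a + s₁ * ((x : ℝ) - (a : ℝ)) with hg₁
  have hg₁c : DConvex g₁ := by
    rw [hDConvex]
    intro i _ _
    simp only [hg₁]
    refine le_of_eq ?_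
    push_cast
    ring
  have hg₁le : ∀ j ∈ Set.Icc a b, g₁ j ≤ f j := by
    intro j hj
    rcases eq_or_lt_of_le hj.1 with rfl | hja
    · simp [hg₁]
    · have hmem : j ∈ Finset.Icc (a + 1) b := Finset.mem_Icc.mpr ⟨by omega, hj.2⟩
      have h1 : s₁ ≤ (f j - f a) / ((j : ℝ) - (a : ℝ)) := Finset.inf'_le _ hmem
      have h2 : (0 : ℝ) < (j : ℝ) - (a : ℝ) := by
        have : (a : ℝ) < (j : ℝ) := by exact_mod_cast hja
        linarith
      have h3 := (le_div_iff₀ h2).mp h1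
      simp only [hg₁]
      linarith
  have ha' : h a = f a := le_antisymm (hle a ⟨le_refl a, hab⟩)
    ((hh a ⟨le_refl a, hab⟩).1 ⟨g₁, hg₁c, hg₁le, by simp [hg₁]⟩)
  -- endpoints: h b = f b
  have hne2 : (Finset.Icc a (b - 1)).Nonempty := ⟨a, Finset.mem_Icc.mpr ⟨le_refl a, by omega⟩⟩
  set s₂ := (Finset.Icc a (b - 1)).sup' hne2 (fun i => (f b - f i) / ((b : ℝ) - (i : ℝ))) with hs₂
  set g₂ : ℤ → ℝ := fun x => f b + s₂ * ((x : ℝ) - (b : ℝ)) with hg₂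
  have hg₂c : DConvex g₂ := by
    rw [hDConvex]
    intro i _ _
    simp only [hg₂]
    refine le_of_eq ?_
    push_cast
    ring
  have hg₂le : ∀ j ∈ Set.Icc a b, g₂ j ≤ f j := by
    intro j hj
    rcases eq_or_lt_of_le hj.2 with rfl | hjb
    · simp [hg₂]
    · have hmem : j ∈ Finset.Icc a (b - 1) := Finset.mem_Icc.mpr ⟨hj.1, by omega⟩
      have h1 : (f b - f j) / ((b : ℝ) - (j : ℝ)) ≤ s₂ := by
        rw [hs₂]
        exact Finset.le_sup' (fun i => (f b - f i) / ((b : ℝ) - (i : ℝ))) hmem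
      have h2 : (0 : ℝ) < (b : ℝ) - (j : ℝ) := by
        have : (j : ℝ) < (b : ℝ) := by exact_mod_cast hjb
        linarith
      have h3 := (div_le_iff₀ h2).mp h1
      simp only [hg₂]
      linarith
  have hb' : h b = f b := le_antisymm (hle b ⟨hab, le_refl b⟩)
    ((hh b ⟨hab, le_refl b⟩).1 ⟨g₂, hg₂c, hg₂le, by simp [hg₂]⟩)
  -- key inequality : J h ≤ J g for any competitor g
  have key : ∀ g : ℤ → ℝ, (∀ j ∈ Set.Icc a b, g j ≤ f j) → g a = f a → g b = f b →
      J h ≤ J g := by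
    intro g hgle hga hgb
    rw [hJ g, hJ h]
    set c : ℤ → ℝ := fun i => lsl ψ (h i - h (i - 1)) with hc
    set e : ℤ → ℝ := fun i => g i - h i with he
    have step1 : ∀ i ∈ Finset.Icc (a + 1) b,
        ψ (h i - h (i - 1)) + c i * (e i - e (i - 1)) ≤ ψ (g i - g (i - 1)) := by
      intro i _
      have hs := lsl_subgrad hψ (h i - h (i - 1)) (g i - g (i - 1))
      simp only [hc, he]
      have hrw : g i - h i - (g (i - 1) - h (i - 1))
          = (g i - g (i - 1)) - (h i - h (i - 1)) := by ring
      rw [hrw]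
      exact hs
    have sum1 : (∑ i ∈ Finset.Icc (a + 1) b, ψ (h i - h (i - 1)))
        + ∑ i ∈ Finset.Icc (a + 1) b, c i * (e i - e (i - 1))
        ≤ ∑ i ∈ Finset.Icc (a + 1) b, ψ (g i - g (i - 1)) := by
      rw [← Finset.sum_add_distrib]
      exact Finset.sum_le_sum step1
    have hea : e a = 0 := by simp [he, hga, ha']
    have heb : e b = 0 := by simp [he, hgb, hb']
    have snn : 0 ≤ ∑ i ∈ Finset.Icc (a + 1) b, c i * (e i - e (i - 1)) := by
      rw [abel_aux c e a b (by omega), hea, heb]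
      have hsum : 0 ≤ ∑ i ∈ Finset.Icc (a + 1) (b - 1), (c i - c (i + 1)) * e i := by
        apply Finset.sum_nonneg
        intro i hi
        rw [Finset.mem_Icc] at hi
        have er1 : i - 1 + 1 = i := by ring
        have er2 : i - 1 + 2 = i + 1 := by ring
        have hd := hconv2 (i - 1) (by omega) (by omega)
        rw [er1, er2] at hd
        have er3 : i + 1 - 1 = i := by ring
        have hcm : c i ≤ c (i + 1) := by
          simp only [hc]
          rw [er3]
          exact lsl_mono hψ hd
        rcases eq_or_lt_of_le hcm with hceq | hclt
        · rw [hceq]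
          simp
        · have hdlt : h i - h (i - 1) < h (i + 1) - h i := by
            rcases eq_or_lt_of_le hd with hdeq | hl
            · exfalso
              have : c i = c (i + 1) := by
                simp only [hc]
                rw [er3, hdeq]
              exact absurd this (ne_of_lt hclt)
            · exact hl
          have hcontact := contact (i - 1) (by omega) (by omega)
            (by rw [er1, er2]; exact hdlt)
          rw [er1] at hcontact
          have hgi : g i ≤ f i := hgle i ⟨by omega, by omega⟩
          have hei : e i ≤ 0 := by
            simp only [he]
            rw [hcontact]
            linarith
          have hp : 0 ≤ (c (i + 1) - c i) * (-e i) := mul_nonneg (by linarith) (by linarith)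
          have hq : (c i - c (i + 1)) * e i = (c (i + 1) - c i) * (-e i) := by ring
          rw [hq]
          exact hp
      linarith
    linarith
  refine IsLeast.csInf_eq ⟨⟨h, ⟨hle, ha', hb'⟩, rfl⟩, ?_⟩
  rintro y ⟨g, ⟨hg1, hg2, hg3⟩, rfl⟩
  exact key g hg1 hg2 hg3
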